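/- Let 𝔍 be a W-graph ideal with respect to J and q_{y,w} the associated polynomials. For all y < w in 𝔍, the degree of q_{y,w} is at most l(w) − l(y) − 1. -/

import Mathlib

open LaurentPolynomial Polynomial

noncomputable section

namespace WGI

/-- The ring `A = ℤ[q,q⁻¹]` of Laurent polynomials. -/
abbrev A : Type := LaurentPolynomial ℤ

/-- The indeterminate `q`. -/
def Q : A := LaurentPolynomial.T 1

/-- The element `q⁻¹`. -/
def Qi : A := LaurentPolynomial.T (-1)

variable {B W : Type} [Group W] {M : CoxeterMatrix B} (cs : CoxeterSystem M W)

/-- One step of the relation generating the Bruhat order: `w = tu` for a reflection `t`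
(or `t = 1`) and `l(u) ≤ l(w)`. -/
def BStep (u w : W) : Prop :=
  cs.length u ≤ cs.length w ∧ ∃ t : W, (cs.IsReflection t ∨ t = 1) ∧ w = t * u

/-- The Bruhat order on `W`: the transitive (and reflexive) closure of `BStep`. -/
def BrLe (u w : W) : Prop := Relation.ReflTransGen (BStep cs) u w

/-- Strict Bruhat order. -/
def BrLt (u w : W) : Prop := BrLe cs u w ∧ u ≠ w

/-- The left weak order: `u ≤_L w` iff `l(wu⁻¹) = l(w) - l(u)`, i.e. `u` is a suffix of `w`. -/
def WkLe (u w : W) : Prop := cs.length (w * u⁻¹) + cs.length u = cs.length w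

/-- Strict left weak order. -/
def WkLt (u w : W) : Prop := WkLe cs u w ∧ u ≠ w

/-- An ideal of `(W, ≤_L)`: a subset closed under taking suffixes. -/
def IsIdealWk (I : Set W) : Prop := ∀ u w : W, WkLe cs u w → w ∈ I → u ∈ I

/-- The set `D_J` of minimal left coset representatives of `W_J`. -/
def DD (J : Set B) : Set W := { w | ∀ j ∈ J, cs.length w < cs.length (w * cs.simple j) }

/-- Strong ascent: `sw > w` and `sw ∈ I`. -/
def SA (I : Set W) (s : B) (w : W) : Prop :=
  cs.length w < cs.length (cs.simple s * w) ∧ cs.simple s * w ∈ I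

/-- Strong descent: `sw < w`. -/
def SD (s : B) (w : W) : Prop := cs.length (cs.simple s * w) < cs.length w

/-- Weak ascent: `sw > w` and `sw ∈ D_J \ I`. -/
def WA (I : Set W) (J : Set B) (s : B) (w : W) : Prop :=
  cs.length w < cs.length (cs.simple s * w) ∧ cs.simple s * w ∈ DD cs J \ I

/-- Weak descent: `sw > w` and `sw ∉ D_J`. -/
def WD (J : Set B) (s : B) (w : W) : Prop :=
  cs.length w < cs.length (cs.simple s * w) ∧ cs.simple s * w ∉ DD cs J

/-- Descents: strong or weak. -/
def Desc (J : Set B) (s : B) (w : W) : Prop := SD cs s w ∨ WD cs J s w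

/-- Ascents: strong or weak. -/
def Asc (I : Set W) (J : Set B) (s : B) (w : W) : Prop := SA cs I s w ∨ WA cs I J s w

/-- The data making the ideal `I` (of the left weak order, contained in `D_J`) a
`W`-graph ideal with respect to `J`: an `H(W)`-module (a module together with operators
`T s` satisfying the quadratic and braid relations of the Hecke algebra) which is free
over `A` with basis indexed by `I`, on which the generators act by the four-case formula
of Definition 5.2, together with a compatible semilinear bar involution fixing `b₁`. -/
structure WGModule (I : Set W) (J : Set B) where
  V : Type
  [acg : AddCommGroup V]
  [mod : Module A V]
  ideal : IsIdealWk cs I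
  subset : I ⊆ DD cs J
  one_mem : (1 : W) ∈ I
  bas : Module.Basis I A V
  T : B → V →ₗ[A] V
  quad : ∀ s : B, (T s) ∘ₗ (T s) = LinearMap.id + (Q - Qi) • T s
  braid : ∀ s t : B,
    ((CoxeterSystem.alternatingWord s t (M s t)).map fun i => (T i : Module.End A V)).prod =
    ((CoxeterSystem.alternatingWord t s (M s t)).map fun i => (T i : Module.End A V)).prod
  /-- the polynomials `r^s_{y,w}` (divided by `q`, as elements of `ℤ[q]` with zero constant
  term they are recorded in `qℤ[q]` via `r_const`); `r s w y` is `r^s_{y,w}`. -/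
  r : B → I → (I →₀ Polynomial ℤ)
  r_const : ∀ (s : B) (w y : I), ((r s w) y).coeff 0 = 0
  r_supp : ∀ (s : B) (w y : I), (r s w) y ≠ 0 → BrLt cs (y : W) (cs.simple s * (w : W))
  act_SA : ∀ (s : B) (w : I) (h : SA cs I s (w : W)),
    T s (bas w) = bas ⟨cs.simple s * (w : W), h.2⟩
  act_SD : ∀ (s : B) (w : I), SD cs s (w : W) → ∀ h' : cs.simple s * (w : W) ∈ I,
    T s (bas w) = bas ⟨cs.simple s * (w : W), h'⟩ + (Q - Qi) • bas w
  act_WD : ∀ (s : B) (w : I), WD cs J s (w : W) → T s (bas w) = -Qi • bas w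
  act_WA : ∀ (s : B) (w : I), WA cs I J s (w : W) →
    T s (bas w) = Q • bas w - (r s w).sum fun y p => (Polynomial.toLaurent p) • bas y
  bar : V → V
  bar_add : ∀ x y : V, bar (x + y) = bar x + bar y
  bar_smul : ∀ (a : A) (x : V), bar (a • x) = (LaurentPolynomial.invert a) • bar x
  bar_one : bar (bas ⟨(1 : W), one_mem⟩) = bas ⟨(1 : W), one_mem⟩
  bar_T : ∀ (s : B) (x : V), bar (T s x) = T s (bar x) - (Q - Qi) • bar x

attribute [instance] WGModule.acg WGModule.mod

/-- `I` is a `W`-graph ideal with respect to `J`. -/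
def IsWGraphIdeal (I : Set W) (J : Set B) : Prop := Nonempty (WGModule cs I J)


open scoped Classical


/-! ### Coefficient bounds for Laurent polynomials -/

/-- `UB m f`: all coefficients of `f` in degrees `> m` vanish. -/
def UB (m : ℤ) (f : A) : Prop := ∀ k : ℤ, m < k → f.coeff k = 0

namespace UB

theorem mono {m m' : ℤ} {f : A} (h : m ≤ m') (hf : UB m f) : UB m' f :=
  fun k hk => hf k (lt_of_le_of_lt h hk)

theorem zero (m : ℤ) : UB m (0 : A) := fun k _ => rfl

theorem add {m : ℤ} {f g : A} (hf : UB m f) (hg : UB m g) : UB m (f + g) := by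
  intro k hk
  rw [AddMonoidAlgebra.coeff_add, Finsupp.add_apply, hf k hk, hg k hk, add_zero]

theorem neg {m : ℤ} {f : A} (hf : UB m f) : UB m (-f) := by
  intro k hk
  rw [AddMonoidAlgebra.coeff_neg, Finsupp.neg_apply, hf k hk, neg_zero]

theorem sub {m : ℤ} {f g : A} (hf : UB m f) (hg : UB m g) : UB m (f - g) := by
  rw [sub_eq_add_neg]; exact hf.add hg.neg

theorem mul {m m' : ℤ} {f g : A} (hf : UB m f) (hg : UB m' g) : UB (m + m') (f * g) := by
  intro k hk
  rw [AddMonoidAlgebra.coeff_mul]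
  apply Finset.sum_eq_zero
  intro i hi
  apply Finset.sum_eq_zero
  intro j hj
  simp only []
  rw [if_neg]
  intro hij
  rcases le_or_gt i m with h1 | h1
  · rcases le_or_gt j m' with h2 | h2
    · omega
    · exact (Finsupp.mem_support_iff.mp hj) (hg _ h2)
  · exact (Finsupp.mem_support_iff.mp hi) (hf _ h1)

theorem mul_le {m m' n : ℤ} {f g : A} (hf : UB m f) (hg : UB m' g) (h : m + m' ≤ n) :
    UB n (f * g) := (hf.mul hg).mono h

theorem T (n : ℤ) : UB n (LaurentPolynomial.T n : A) := by
  intro k hk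
  rw [show ((LaurentPolynomial.T n : A).coeff k) = if n = k then 1 else 0 from LaurentPolynomial.T_apply k n]
  rw [if_neg (by omega)]

theorem one : UB 0 (1 : A) := by
  have : (1 : A) = LaurentPolynomial.T 0 := (LaurentPolynomial.T_zero).symm
  rw [this]; exact T 0

theorem Q_bound : UB 1 (Q : A) := T 1

theorem Qi_bound : UB (-1) (Qi : A) := T (-1)

theorem finsetSum {α : Type*} {m : ℤ} (s : Finset α) (f : α → A)
    (h : ∀ a ∈ s, UB m (f a)) : UB m (∑ a ∈ s, f a) := by
  intro k hk
  rw [AddMonoidAlgebra.coeff_sum, Finset.sum_apply']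
  exact Finset.sum_eq_zero fun a ha => h a ha k hk

theorem smul {m m' : ℤ} {a : A} {f : A} (ha : UB m a) (hf : UB m' f) : UB (m + m') (a • f) := by
  rw [smul_eq_mul]; exact ha.mul hf

end UB

theorem toLaurent_coeff (p : Polynomial ℤ) (n : ℕ) :
    (Polynomial.toLaurent p).coeff (n : ℤ) = p.coeff n := by
  rw [LaurentPolynomial.coeff_toLaurent]
  exact Finsupp.mapDomain_apply Nat.castEmbedding.injective p.toFinsupp.coeff n

theorem toLaurent_coeff_neg (p : Polynomial ℤ) (k : ℤ) (hk : k < 0) :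
    (Polynomial.toLaurent p).coeff k = 0 := by
  rw [LaurentPolynomial.coeff_toLaurent]
  apply Finsupp.mapDomain_notin_range
  rintro ⟨n, rfl⟩; exact absurd hk (not_lt.mpr (Int.natCast_nonneg n))

theorem UB.toLaurent {p : Polynomial ℤ} {n : ℤ} (h : ∀ m : ℕ, n < (m : ℤ) → p.coeff m = 0) :
    UB n (Polynomial.toLaurent p) := by
  intro k hk
  rcases lt_or_ge k 0 with h0 | h0
  · exact toLaurent_coeff_neg p k h0
  · obtain ⟨m, rfl⟩ := Int.eq_ofNat_of_zero_le h0
    rw [toLaurent_coeff]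
    exact h m hk

/-- `invert` of a polynomial with zero constant term has all coefficients in degrees `≥ 0` zero. -/
theorem UB.invert_toLaurent {p : Polynomial ℤ} (h : p.coeff 0 = 0) :
    UB (-1) (LaurentPolynomial.invert (Polynomial.toLaurent p)) := by
  intro k hk
  rw [LaurentPolynomial.invert_apply]
  rcases lt_or_ge 0 k with h1 | h1
  · exact toLaurent_coeff_neg p (-k) (by omega)
  · have : k = 0 := le_antisymm h1 (by omega)
    subst this
    show (Polynomial.toLaurent p).coeff ((0 : ℕ) : ℤ) = 0
    rw [toLaurent_coeff]; exact h

/-! ### Coxeter facts -/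

theorem brLe_cases {u w : W} (h : BrLe cs u w) : u = w ∨ cs.length u < cs.length w := by
  induction h with
  | refl => exact Or.inl rfl
  | @tail b c hb hstep ih =>
    obtain ⟨hlen, t, ht | rfl, rfl⟩ := hstep
    · rcases ih with rfl | hlt
      · exact Or.inr (lt_of_le_of_ne' hlen (ht.length_mul_right_ne u))
      · exact Or.inr (lt_of_lt_of_le hlt hlen)
    · rw [one_mul]; exact ih

theorem BrLt.length_lt {u w : W} (h : BrLt cs u w) : cs.length u < cs.length w :=
  (brLe_cases cs h.1).resolve_left h.2

theorem BrLt.trans_of {u v w : W} (h1 : BrLt cs u v) (h2 : BrLt cs v w) : BrLt cs u w :=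
  ⟨h1.1.trans h2.1, fun he => absurd (he ▸ (h1.length_lt cs).trans (h2.length_lt cs)) (lt_irrefl _)⟩

/-- If `s` is a left descent of `w ∈ I` then `sw ∈ I`. -/
theorem mem_of_descent {I : Set W} (hI : IsIdealWk cs I) {w : W} {s : B}
    (hw : w ∈ I) (h : cs.length (cs.simple s * w) < cs.length w) : cs.simple s * w ∈ I := by
  apply hI _ w _ hw
  unfold WkLe
  have h1 : w * (cs.simple s * w)⁻¹ = cs.simple s := by
    rw [mul_inv_rev, cs.inv_simple]; group
  rw [h1, cs.length_simple]
  have := cs.length_simple_mul w s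
  omega

theorem length_simple_mul_mem {w : W} {s : B} :
    cs.length (cs.simple s * w) = cs.length w + 1 ∨ cs.length (cs.simple s * w) + 1 = cs.length w :=
  cs.length_simple_mul w s
/-! ### Coordinates of the `T`-action -/

variable {I : Set W} {J : Set B}

/-- Coordinates of `bar (bas w)` in the basis `bas`. -/
def Rc (D : WGModule cs I J) (w : I) : I →₀ A := D.bas.repr (D.bar (D.bas w))

/-- Coordinates of `T s (bas z)` in the basis `bas`. -/
def Tc (D : WGModule cs I J) (s : B) (z : I) : I →₀ A := D.bas.repr (D.T s (D.bas z))

/-- The degree bounds on the polynomials `r^s_{y,z}`. -/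
def BClaim (D : WGModule cs I J) (s : B) (z : I) : Prop :=
  ∀ y : I, UB ((cs.length (z : W) : ℤ) + 1 - cs.length (y : W)) (Polynomial.toLaurent (D.r s z y))

/-- The degree bounds and triangularity of `bar (bas w)`. -/
def AClaim (D : WGModule cs I J) (w : I) : Prop :=
  Rc cs D w w = 1 ∧
  (∀ z : I, z ≠ w → Rc cs D w z ≠ 0 → cs.length (z : W) < cs.length (w : W)) ∧
  (∀ z : I, UB ((cs.length (w : W) : ℤ) - cs.length (z : W)) (Rc cs D w z))

theorem cases4 (D : WGModule cs I J) (s : B) (z : I) :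
    SD cs s (z : W) ∨ SA cs I s (z : W) ∨ WA cs I J s (z : W) ∨ WD cs J s (z : W) := by
  rcases cs.length_simple_mul (z : W) s with h | h
  · have hlt : cs.length (z : W) < cs.length (cs.simple s * z) := by omega
    by_cases h1 : cs.simple s * (z : W) ∈ I
    · exact Or.inr (Or.inl ⟨hlt, h1⟩)
    · by_cases h2 : cs.simple s * (z : W) ∈ DD cs J
      · exact Or.inr (Or.inr (Or.inl ⟨hlt, h2, h1⟩))
      · exact Or.inr (Or.inr (Or.inr ⟨hlt, h2⟩))
  · exact Or.inl (by unfold SD; omega)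

theorem SD.mem {s : B} {z : I} (hI : IsIdealWk cs I) (h : SD cs s (z : W)) :
    cs.simple s * (z : W) ∈ I :=
  mem_of_descent cs hI z.2 h

theorem Tc_SA {D : WGModule cs I J} {s : B} {z : I} (h : SA cs I s (z : W)) :
    Tc cs D s z = Finsupp.single ⟨cs.simple s * (z : W), h.2⟩ 1 := by
  unfold Tc
  rw [D.act_SA s z h, Module.Basis.repr_self]

theorem Tc_SD {D : WGModule cs I J} {s : B} {z : I} (h : SD cs s (z : W)) :
    Tc cs D s z = Finsupp.single ⟨cs.simple s * (z : W), SD.mem cs D.ideal h⟩ 1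
      + (Q - Qi) • Finsupp.single z 1 := by
  unfold Tc
  rw [D.act_SD s z h (SD.mem cs D.ideal h), map_add, map_smul, Module.Basis.repr_self, Module.Basis.repr_self]

theorem Tc_WD {D : WGModule cs I J} {s : B} {z : I} (h : WD cs J s (z : W)) :
    Tc cs D s z = (-Qi) • Finsupp.single z 1 := by
  unfold Tc
  rw [D.act_WD s z h, map_smul, Module.Basis.repr_self]

theorem Tc_WA {D : WGModule cs I J} {s : B} {z : I} (h : WA cs I J s (z : W)) :
    Tc cs D s z = Q • Finsupp.single z 1
      - (D.r s z).sum fun y p => (Polynomial.toLaurent p) • Finsupp.single y 1 := by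
  unfold Tc
  rw [D.act_WA s z h, map_sub, map_smul, Module.Basis.repr_self, map_finsuppSum]
  congr 1
  apply Finsupp.sum_congr
  intro y _
  rw [map_smul, Module.Basis.repr_self]

theorem sum_single_apply (f : I →₀ Polynomial ℤ) (v : I) :
    ((f.sum fun y p => (Polynomial.toLaurent p) • (Finsupp.single y 1 : I →₀ A))) v
      = Polynomial.toLaurent (f v) := by
  classical
  rw [Finsupp.sum_apply]
  have : ∀ y ∈ f.support,
      ((Polynomial.toLaurent (f y)) • (Finsupp.single y 1 : I →₀ A)) v
        = if y = v then Polynomial.toLaurent (f y) else 0 := by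
    intro y _
    rw [Finsupp.smul_apply, Finsupp.single_apply]
    split <;> simp
  rw [Finsupp.sum, Finset.sum_congr rfl this]
  rw [Finset.sum_ite_eq' f.support v fun y => Polynomial.toLaurent (f y)]
  split
  · rfl
  · rw [Finsupp.notMem_support_iff.mp (by assumption), map_zero]

theorem single_apply' (z v : I) (a : A) :
    (Finsupp.single z a : I →₀ A) v = if z = v then a else 0 := Finsupp.single_apply
theorem UB.ite_zero {m : ℤ} (c : Prop) [Decidable c] {a : A} (h : c → UB m a) :
    UB m (if c then a else 0) := by
  split
  · exact h (by assumption)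
  · exact UB.zero m

theorem length_simple_mul_of_lt {z : W} {s : B} (h : cs.length z < cs.length (cs.simple s * z)) :
    cs.length (cs.simple s * z) = cs.length z + 1 := by
  have := cs.length_simple_mul z s; omega

theorem Tc_facts (D : WGModule cs I J) (s : B) (z v : I)
    (hr : WA cs I J s (z : W) → BClaim cs D s z) :
    UB ((cs.length (z : W) : ℤ) + 1 - cs.length (v : W)) (Tc cs D s z v) ∧
    (Tc cs D s z v ≠ 0 → cs.length (v : W) ≤ cs.length (z : W) + 1) ∧
    (Tc cs D s z v ≠ 0 → cs.length (v : W) = cs.length (z : W) + 1 →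
      (v : W) = cs.simple s * (z : W)) := by
  rcases cases4 cs D s z with h | h | h | h
  · -- strong descent
    have hlen : cs.length (cs.simple s * (z : W)) + 1 = cs.length (z : W) := by
      have := cs.length_simple_mul (z : W) s
      unfold SD at h
      omega
    rw [Tc_SD cs h, Finsupp.add_apply, single_apply', Finsupp.smul_apply, single_apply',
      smul_eq_mul]
    rw [mul_ite, mul_one, mul_zero]
    constructor
    · apply UB.add
      · apply UB.ite_zero
        intro hv
        have hv' : cs.simple s * (z : W) = (v : W) := congrArg Subtype.val hv
        have : cs.length (v : W) + 1 = cs.length (z : W) := by rw [← hv']; omega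
        exact UB.one.mono (by omega)
      · apply UB.ite_zero
        intro hv
        have : cs.length (v : W) = cs.length (z : W) := by rw [← hv]
        exact (UB.Q_bound.sub (UB.Qi_bound.mono (by omega : (-1:ℤ) ≤ 1))).mono (by omega)
    refine ⟨?_, ?_⟩ <;> intro h0
    · by_cases h1 : (⟨cs.simple s * (z : W), SD.mem cs D.ideal h⟩ : I) = v
      · have h1' : cs.simple s * (z : W) = (v : W) := congrArg Subtype.val h1
        have : cs.length (v : W) + 1 = cs.length (z : W) := by rw [← h1']; omega
        omega
      · rw [if_neg h1] at h0
        by_cases h2 : z = v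
        · rw [← h2]; omega
        · rw [if_neg h2, zero_add] at h0; exact absurd rfl h0
    · intro hlv
      exfalso
      by_cases h1 : (⟨cs.simple s * (z : W), SD.mem cs D.ideal h⟩ : I) = v
      · have h1' : cs.simple s * (z : W) = (v : W) := congrArg Subtype.val h1
        have : cs.length (v : W) + 1 = cs.length (z : W) := by rw [← h1']; omega
        omega
      · rw [if_neg h1] at h0
        by_cases h2 : z = v
        · rw [← h2] at hlv; omega
        · rw [if_neg h2, zero_add] at h0; exact absurd rfl h0
  · -- strong ascent
    have hlen := length_simple_mul_of_lt cs h.1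
    rw [Tc_SA cs h, single_apply']
    constructor
    · apply UB.ite_zero
      intro hv
      have hv' : cs.simple s * (z : W) = (v : W) := congrArg Subtype.val hv
      have : cs.length (v : W) = cs.length (z : W) + 1 := by rw [← hv']; omega
      exact UB.one.mono (by omega)
    refine ⟨?_, ?_⟩ <;> intro h0
    · by_cases h1 : (⟨cs.simple s * (z : W), h.2⟩ : I) = v
      · have h1' : cs.simple s * (z : W) = (v : W) := congrArg Subtype.val h1
        have : cs.length (v : W) = cs.length (z : W) + 1 := by rw [← h1']; omega
        omega
      · rw [if_neg h1] at h0; exact absurd rfl h0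
    · intro _
      by_cases h1 : (⟨cs.simple s * (z : W), h.2⟩ : I) = v
      · rw [← congrArg Subtype.val h1]
      · rw [if_neg h1] at h0; exact absurd rfl h0
  · -- weak ascent
    have hlen := length_simple_mul_of_lt cs h.1
    have hval : Tc cs D s z v = Q * (if z = v then 1 else 0)
        - Polynomial.toLaurent (D.r s z v) := by
      rw [Tc_WA cs h, Finsupp.sub_apply, Finsupp.smul_apply, single_apply', smul_eq_mul,
        sum_single_apply]
    rw [hval, mul_ite, mul_one, mul_zero]
    have hrv : D.r s z v ≠ 0 → cs.length (v : W) < cs.length (z : W) + 1 := by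
      intro hne
      have := (D.r_supp s z v hne).length_lt cs
      omega
    constructor
    · apply UB.sub
      · apply UB.ite_zero
        intro hv
        have : cs.length (v : W) = cs.length (z : W) := by rw [← hv]
        exact UB.Q_bound.mono (by omega)
      · exact hr h v
    refine ⟨?_, ?_⟩ <;> intro h0
    · by_cases h2 : z = v
      · rw [← h2]; omega
      · rw [if_neg h2, zero_sub, neg_ne_zero] at h0
        have := hrv (fun hc => h0 (by rw [hc, map_zero]))
        omega
    · intro hlv
      exfalso
      by_cases h2 : z = v
      · rw [← h2] at hlv; omega
      · rw [if_neg h2, zero_sub, neg_ne_zero] at h0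
        have := hrv (fun hc => h0 (by rw [hc, map_zero]))
        omega
  · -- weak descent
    rw [Tc_WD cs h, Finsupp.smul_apply, single_apply', smul_eq_mul, mul_ite, mul_one, mul_zero]
    constructor
    · apply UB.ite_zero
      intro hv
      have : cs.length (v : W) = cs.length (z : W) := by rw [← hv]
      exact (UB.Qi_bound.neg).mono (by omega)
    refine ⟨?_, ?_⟩ <;> intro h0
    · by_cases h2 : z = v
      · rw [← h2]; omega
      · rw [if_neg h2] at h0; exact absurd rfl h0
    · intro hlv
      exfalso
      by_cases h2 : z = v
      · rw [← h2] at hlv; omega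
      · rw [if_neg h2] at h0; exact absurd rfl h0
/-- `bar` as an additive homomorphism. -/
def barHom (D : WGModule cs I J) : D.V →+ D.V := AddMonoidHom.mk' D.bar D.bar_add

@[simp] theorem barHom_apply (D : WGModule cs I J) (x : D.V) : barHom cs D x = D.bar x := rfl

theorem repr_sum_eq (D : WGModule cs I J) (x : D.V) :
    x = (D.bas.repr x).sum fun z a => a • D.bas z := by
  conv_lhs => rw [← D.bas.linearCombination_repr x]
  rw [Finsupp.linearCombination_apply]

theorem repr_T_apply (D : WGModule cs I J) (s : B) (x : D.V) (v : I) :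
    D.bas.repr (D.T s x) v
      = ∑ z ∈ (D.bas.repr x).support, (D.bas.repr x) z * (Tc cs D s z) v := by
  conv_lhs => rw [repr_sum_eq cs D x]
  rw [map_finsuppSum, map_finsuppSum, Finsupp.sum_apply]
  rw [Finsupp.sum]
  apply Finset.sum_congr rfl
  intro z _
  rw [map_smul, map_smul, Finsupp.smul_apply, smul_eq_mul]
  rfl

theorem UB.finsuppSum {ι N : Type*} [Zero N] {m : ℤ} (f : ι →₀ N) (g : ι → N → A)
    (h : ∀ a ∈ f.support, UB m (g a (f a))) : UB m (f.sum g) :=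
  UB.finsetSum _ _ h

theorem invert_Q_eq : LaurentPolynomial.invert (Q : A) = Qi := by
  show LaurentPolynomial.invert (LaurentPolynomial.T 1) = LaurentPolynomial.T (-1)
  exact LaurentPolynomial.invert_T 1

theorem claimAB (D : WGModule cs I J) (n : ℕ) :
    (∀ w : I, cs.length (w : W) ≤ n → AClaim cs D w) ∧
    (∀ (s : B) (w : I), cs.length (w : W) ≤ n → WA cs I J s (w : W) → BClaim cs D s w) := by
  induction n using Nat.strong_induction_on with
  | _ n IH =>
  have partA : ∀ w : I, cs.length (w : W) ≤ n → AClaim cs D w := by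
    intro w hw
    by_cases hw1 : (w : W) = 1
    · have hw0 : cs.length (w : W) = 0 := by rw [hw1]; exact cs.length_one
      have hweq : w = ⟨1, D.one_mem⟩ := Subtype.ext hw1
      have hRc : Rc cs D w = Finsupp.single w 1 := by
        unfold Rc
        conv_lhs => rw [hweq]
        rw [D.bar_one, Module.Basis.repr_self, ← hweq]
      refine ⟨?_, ?_, ?_⟩
      · rw [hRc, single_apply', if_pos rfl]
      · intro z hz hne
        exfalso
        rw [hRc, single_apply', if_neg (fun hc => hz hc.symm)] at hne
        exact hne rfl
      · intro z
        rw [hRc, single_apply']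
        apply UB.ite_zero
        intro hwz
        have : cs.length (z : W) = cs.length (w : W) := by rw [← hwz]
        exact UB.one.mono (by omega)
    · obtain ⟨s, hs⟩ := cs.exists_leftDescent_of_ne_one hw1
      have hs' : cs.length (cs.simple s * (w : W)) < cs.length (w : W) := hs
      set u : I := ⟨cs.simple s * (w : W), mem_of_descent cs D.ideal w.2 hs'⟩ with hu
      have hus : cs.simple s * (u : W) = (w : W) := by
        show cs.simple s * (cs.simple s * (w : W)) = (w : W)
        exact cs.simple_mul_simple_cancel_left s
      have hlu : cs.length (u : W) + 1 = cs.length (w : W) := by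
        have := cs.length_simple_mul (w : W) s
        show cs.length (cs.simple s * (w : W)) + 1 = _
        omega
      have hSA : SA cs I s (u : W) := by
        constructor
        · rw [hus]; omega
        · rw [hus]; exact w.2
      have hn : 1 ≤ n := by omega
      have IH' := IH (n - 1) (by omega)
      obtain ⟨hAu1, hAu2, hAu3⟩ := IH'.1 u (by omega)
      have hsupZ : ∀ z : I, z ∈ (Rc cs D u).support → cs.length (z : W) ≤ cs.length (u : W) := by
        intro z hz
        by_cases hzu : z = u
        · rw [hzu]
        · exact le_of_lt (hAu2 z hzu (Finsupp.mem_support_iff.mp hz))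
      have hrz : ∀ z : I, z ∈ (Rc cs D u).support →
          (WA cs I J s (z : W) → BClaim cs D s z) := by
        intro z hz hWAz
        exact IH'.2 s z (by have := hsupZ z hz; omega) hWAz
      have hbasw : D.bas w = D.T s (D.bas u) := by
        rw [D.act_SA s u hSA]
        congr 1
        exact Subtype.ext hus.symm
      have hRcval : ∀ v : I, Rc cs D w v
          = (∑ z ∈ (Rc cs D u).support, Rc cs D u z * Tc cs D s z v)
            - (Q - Qi) * Rc cs D u v := by
        intro v
        unfold Rc
        rw [hbasw, D.bar_T, map_sub, map_smul, Finsupp.sub_apply, Finsupp.smul_apply, smul_eq_mul]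
        rw [repr_T_apply]
      refine ⟨?_, ?_, ?_⟩
      · -- top coefficient
        rw [hRcval w]
        have humem : u ∈ (Rc cs D u).support :=
          Finsupp.mem_support_iff.mpr (by rw [hAu1]; exact one_ne_zero)
        have hz0 : ∀ z ∈ (Rc cs D u).support, z ≠ u → Rc cs D u z * Tc cs D s z w = 0 := by
          intro z hz hzu
          have hlz : cs.length (z : W) < cs.length (u : W) :=
            hAu2 z hzu (Finsupp.mem_support_iff.mp hz)
          rcases eq_or_ne (Tc cs D s z w) 0 with h0 | h0
          · rw [h0, mul_zero]
          · exfalso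
            have := (Tc_facts cs D s z w (hrz z hz)).2.1 h0
            omega
        rw [Finset.sum_eq_single_of_mem u humem hz0]
        have hTuw : Tc cs D s u w = 1 := by
          rw [Tc_SA cs hSA, single_apply', if_pos (Subtype.ext hus)]
        have hRuw : Rc cs D u w = 0 := by
          by_contra h0
          have hwu : w ≠ u := by
            intro hc
            rw [hc] at hlu
            omega
          have := hAu2 w hwu h0
          omega
        rw [hTuw, hRuw, hAu1]; ring
      · -- strictness
        intro v hvw hne
        by_contra hge
        apply hne
        rw [hRcval v]
        have h2 : (Q - Qi) * Rc cs D u v = 0 := by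
          rcases eq_or_ne (Rc cs D u v) 0 with h0 | h0
          · rw [h0, mul_zero]
          · exfalso
            by_cases hvu : v = u
            · rw [hvu] at hge; omega
            · have := hAu2 v hvu h0; omega
        have h1 : ∀ z ∈ (Rc cs D u).support, Rc cs D u z * Tc cs D s z v = 0 := by
          intro z hz
          rcases eq_or_ne (Tc cs D s z v) 0 with h0 | h0
          · rw [h0, mul_zero]
          · exfalso
            have hfz := Tc_facts cs D s z v (hrz z hz)
            have hle := hfz.2.1 h0
            have hzu := hsupZ z hz
            have hlveq : cs.length (v : W) = cs.length (z : W) + 1 := by omega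
            have hzequ : z = u := by
              by_contra hc
              have := hAu2 z hc (Finsupp.mem_support_iff.mp hz)
              omega
            have hveq := hfz.2.2 h0 hlveq
            rw [hzequ] at hveq
            rw [hus] at hveq
            exact hvw (Subtype.ext hveq)
        rw [Finset.sum_eq_zero h1, h2, sub_zero]
      · -- upper bounds
        intro v
        rw [hRcval v]
        apply UB.sub
        · apply UB.finsetSum
          intro z hz
          have h1 := hAu3 z
          have h2 := (Tc_facts cs D s z v (hrz z hz)).1
          exact (h1.mul h2).mono (by omega)
        · exact ((UB.Q_bound.sub (UB.Qi_bound.mono (by omega))).mul (hAu3 v)).mono (by omega)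
  have partB : ∀ (s : B) (w : I), cs.length (w : W) ≤ n → WA cs I J s (w : W) →
      BClaim cs D s w := by
    intro s w hw hWA v
    obtain ⟨hAw1, hAw2, hAw3⟩ := partA w hw
    have hlsw := length_simple_mul_of_lt cs hWA.1
    have hsub : ∀ x y : D.V, D.bar (x - y) = D.bar x - D.bar y := fun x y =>
      map_sub (barHom cs D) x y
    have e2 := D.bar_T s (D.bas w)
    rw [D.act_WA s w hWA] at e2
    rw [hsub, D.bar_smul, invert_Q_eq] at e2
    have e4 : D.bar ((D.r s w).sum fun y p => (Polynomial.toLaurent p) • D.bas y)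
        = (D.r s w).sum fun y p =>
          (LaurentPolynomial.invert (Polynomial.toLaurent p)) • D.bar (D.bas y) := by
      rw [show D.bar ((D.r s w).sum fun y p => (Polynomial.toLaurent p) • D.bas y)
          = (barHom cs D) ((D.r s w).sum fun y p => (Polynomial.toLaurent p) • D.bas y) from rfl]
      rw [map_finsuppSum]
      apply Finsupp.sum_congr
      intro y _
      rw [barHom_apply, D.bar_smul]
    rw [e4] at e2
    have e3 : ((D.r s w).sum fun y p =>
        (LaurentPolynomial.invert (Polynomial.toLaurent p)) • D.bar (D.bas y))
        = Q • (D.bar (D.bas w)) - D.T s (D.bar (D.bas w)) := by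
      have e5 : ((D.r s w).sum fun y p =>
          (LaurentPolynomial.invert (Polynomial.toLaurent p)) • D.bar (D.bas y))
          = Qi • (D.bar (D.bas w)) - (D.T s (D.bar (D.bas w))
              - (Q - Qi) • (D.bar (D.bas w))) := by
        rw [← e2]; abel
      rw [e5]
      have h6 : Qi • (D.bar (D.bas w)) - (D.T s (D.bar (D.bas w))
            - (Q - Qi) • (D.bar (D.bas w)))
          = (Qi + (Q - Qi)) • (D.bar (D.bas w)) - D.T s (D.bar (D.bas w)) := by
        rw [add_smul]; abel
      have hQ : Qi + (Q - Qi) = Q := by ring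
      rw [h6, hQ]
    have ecoord : ((D.r s w).sum fun y p =>
          (LaurentPolynomial.invert (Polynomial.toLaurent p)) * Rc cs D y v)
        = Q * Rc cs D w v - ∑ z ∈ (Rc cs D w).support, Rc cs D w z * Tc cs D s z v := by
      have h0 := congrArg (fun t => D.bas.repr t v) e3
      simp only [map_finsuppSum, map_sub, map_smul, Finsupp.sum_apply, Finsupp.sub_apply,
        Finsupp.smul_apply, smul_eq_mul] at h0
      rw [repr_T_apply] at h0
      exact h0
    have hwmem : w ∈ (Rc cs D w).support :=
      Finsupp.mem_support_iff.mpr (by rw [hAw1]; exact one_ne_zero)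
    have hsplit : ∑ z ∈ (Rc cs D w).support, Rc cs D w z * Tc cs D s z v
        = Rc cs D w w * Tc cs D s w v
          + ∑ z ∈ (Rc cs D w).support.erase w, Rc cs D w z * Tc cs D s z v :=
      (Finset.add_sum_erase _ _ hwmem).symm
    have hTcwv : Tc cs D s w v = Q * (if w = v then 1 else 0)
        - Polynomial.toLaurent (D.r s w v) := by
      rw [Tc_WA cs hWA, Finsupp.sub_apply, Finsupp.smul_apply, single_apply', smul_eq_mul,
        sum_single_apply]
    rw [hsplit, hTcwv, hAw1, one_mul] at ecoord
    have hkey : Polynomial.toLaurent (D.r s w v)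
        = ((D.r s w).sum fun y p =>
            (LaurentPolynomial.invert (Polynomial.toLaurent p)) * Rc cs D y v)
          - Q * Rc cs D w v + Q * (if w = v then 1 else 0)
          + ∑ z ∈ (Rc cs D w).support.erase w, Rc cs D w z * Tc cs D s z v := by
      linear_combination -ecoord
    rw [hkey]
    apply UB.add
    apply UB.add
    apply UB.sub
    · -- the sum over the support of r
      apply UB.finsuppSum
      intro y hy
      have hy0 : D.r s w y ≠ 0 := Finsupp.mem_support_iff.mp hy
      have hylt : cs.length (y : W) < cs.length (w : W) + 1 := by
        have := (D.r_supp s w y hy0).length_lt cs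
        omega
      have h1 := UB.invert_toLaurent (D.r_const s w y)
      have h2 := (partA y (by omega)).2.2 v
      exact (h1.mul h2).mono (by omega)
    · exact (UB.Q_bound.mul (hAw3 v)).mono (by omega)
    · apply (UB.Q_bound.mul (m' := (cs.length (w : W) : ℤ) - cs.length (v : W)) ?_).mono
        (by omega)
      apply UB.ite_zero
      intro hwv
      have : cs.length (v : W) = cs.length (w : W) := by rw [← hwv]
      exact UB.one.mono (by omega)
    · -- the erased sum
      apply UB.finsetSum
      intro z hz
      obtain ⟨hzw, hzmem⟩ := Finset.mem_erase.mp hz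
      have hzlt : cs.length (z : W) < cs.length (w : W) :=
        hAw2 z hzw (Finsupp.mem_support_iff.mp hzmem)
      have hn : 1 ≤ n := by omega
      have h1 := hAw3 z
      have h2 := (Tc_facts cs D s z v (fun hWAz =>
        (IH (n - 1) (by omega)).2 s z (by omega) hWAz)).1
      exact (h1.mul h2).mono (by omega)
  exact ⟨partA, partB⟩
section Final

variable {D : WGModule cs I J}

/-- The coefficients of `bas z` in terms of the `c` family. -/
def Pfin (qp : I → I →₀ Polynomial ℤ) (z : I) : I →₀ A :=
  Finsupp.single z 1 + (qp z).mapRange (fun p => Q * Polynomial.toLaurent p) (by simp)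

theorem Pfin_apply (qp : I → I →₀ Polynomial ℤ) (z v : I) :
    Pfin qp z v = (if z = v then 1 else 0) + Q * Polynomial.toLaurent (qp z v) := by
  rw [Pfin, Finsupp.add_apply, single_apply', Finsupp.mapRange_apply]

theorem hQL (p : Polynomial ℤ) :
    (Q : A) * Polynomial.toLaurent p = Polynomial.toLaurent (Polynomial.X * p) := by
  rw [map_mul, Polynomial.toLaurent_X]
  rfl

theorem Phi_Pfin (c : I → D.V) (qp : I → I →₀ Polynomial ℤ)
    (htrans : ∀ w : I,
      D.bas w = c w + (qp w).sum fun y p => (Q * Polynomial.toLaurent p) • c y) (z : I) :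
    Finsupp.linearCombination A c (Pfin qp z) = D.bas z := by
  rw [Pfin, map_add, Finsupp.linearCombination_single, one_smul, Finsupp.linearCombination_apply]
  rw [Finsupp.sum_mapRange_index (fun a => by rw [zero_smul])]
  exact (htrans z).symm

theorem Kfacts (c : I → D.V) (qp : I → I →₀ Polynomial ℤ)
    (hsupp : ∀ w y : I, qp w y ≠ 0 → BrLt cs (y : W) (w : W))
    (htrans : ∀ w : I,
      D.bas w = c w + (qp w).sum fun y p => (Q * Polynomial.toLaurent p) • c y) :
    ∀ n : ℕ, ∀ yy : I, cs.length (yy : W) ≤ n →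
      (D.bas.repr (c yy) yy = 1 ∧
        ∀ vv : I, vv ≠ yy → D.bas.repr (c yy) vv ≠ 0 → BrLt cs (vv : W) (yy : W)) := by
  have hKrec : ∀ yy vv : I, D.bas.repr (c yy) vv
      = (if yy = vv then 1 else 0)
        - (qp yy).sum fun y' p =>
            (Q * Polynomial.toLaurent p) * D.bas.repr (c y') vv := by
    intro yy vv
    have h0 := congrArg (fun t => D.bas.repr t vv) (htrans yy)
    simp only [map_add, map_finsuppSum, map_smul, Finsupp.add_apply, Finsupp.sum_apply,
      Finsupp.smul_apply, smul_eq_mul, Module.Basis.repr_self, Finsupp.single_apply] at h0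
    linear_combination -h0
  intro n
  induction n using Nat.strong_induction_on with
  | _ n IHn =>
  intro yy hyy
  constructor
  · rw [hKrec yy yy, if_pos rfl]
    have hz : ((qp yy).sum fun y' p =>
        (Q * Polynomial.toLaurent p) * D.bas.repr (c y') yy) = 0 := by
      apply Finset.sum_eq_zero
      intro y' hy'
      simp only []
      have hbr : BrLt cs (y' : W) (yy : W) := hsupp yy y' (Finsupp.mem_support_iff.mp hy')
      have hly' : cs.length (y' : W) < cs.length (yy : W) := hbr.length_lt cs
      rcases eq_or_ne (D.bas.repr (c y') yy) 0 with h0 | h0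
      · rw [h0, mul_zero]
      · exfalso
        have hne : yy ≠ y' := fun hc => hbr.2 (by rw [hc])
        have h1 := (IHn (n - 1) (by omega) y' (by omega)).2 yy hne h0
        have := h1.length_lt cs
        omega
    rw [hz, sub_zero]
  · intro vv hvv h0
    rw [hKrec yy vv, if_neg (fun hc => hvv hc.symm), zero_sub, neg_ne_zero] at h0
    obtain ⟨y', hy'mem, hy'ne⟩ := Finset.exists_ne_zero_of_sum_ne_zero h0
    have hbr : BrLt cs (y' : W) (yy : W) := hsupp yy y' (Finsupp.mem_support_iff.mp hy'mem)
    have hly' : cs.length (y' : W) < cs.length (yy : W) := hbr.length_lt cs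
    have hKy' : D.bas.repr (c y') vv ≠ 0 := right_ne_zero_of_mul hy'ne
    by_cases hvy' : vv = y'
    · rw [hvy']; exact hbr
    · have h1 := (IHn (n - 1) (by omega) y' (by omega)).2 vv hvy' hKy'
      exact BrLt.trans_of cs h1 hbr

theorem Phi_inj (c : I → D.V) (qp : I → I →₀ Polynomial ℤ)
    (hsupp : ∀ w y : I, qp w y ≠ 0 → BrLt cs (y : W) (w : W))
    (htrans : ∀ w : I,
      D.bas w = c w + (qp w).sum fun y p => (Q * Polynomial.toLaurent p) • c y)
    (f : I →₀ A) (hf : Finsupp.linearCombination A c f = 0) : f = 0 := by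
  by_contra hfne
  obtain ⟨y₀, hy₀mem, hy₀max⟩ := Finset.exists_max_image f.support
    (fun i => cs.length (i : W)) (Finsupp.support_nonempty_iff.mpr hfne)
  have h0 : D.bas.repr (Finsupp.linearCombination A c f) y₀ = 0 := by
    rw [hf, map_zero]; rfl
  rw [Finsupp.linearCombination_apply, map_finsuppSum, Finsupp.sum_apply] at h0
  simp only [map_smul, Finsupp.smul_apply, smul_eq_mul] at h0
  have hered : (f.sum fun i a => a * D.bas.repr (c i) y₀) = f y₀ := by
    rw [Finsupp.sum, Finset.sum_eq_single_of_mem y₀ hy₀mem]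
    · rw [(Kfacts cs c qp hsupp htrans (cs.length (y₀ : W)) y₀ le_rfl).1, mul_one]
    · intro i hi hine
      rcases eq_or_ne (D.bas.repr (c i) y₀) 0 with hz | hz
      · rw [hz, mul_zero]
      · exfalso
        have hbr := (Kfacts cs c qp hsupp htrans (cs.length (i : W)) i le_rfl).2 y₀
          (Ne.symm hine) hz
        have := hbr.length_lt cs
        have := hy₀max i hi
        omega
  rw [hered] at h0
  exact Finsupp.mem_support_iff.mp hy₀mem h0

theorem ident (c : I → D.V) (qp : I → I →₀ Polynomial ℤ)
    (hcbar : ∀ w : I, D.bar (c w) = c w)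
    (hsupp : ∀ w y : I, qp w y ≠ 0 → BrLt cs (y : W) (w : W))
    (htrans : ∀ w : I,
      D.bas w = c w + (qp w).sum fun y p => (Q * Polynomial.toLaurent p) • c y)
    (w : I) :
    Finsupp.mapRange (LaurentPolynomial.invert (R := ℤ)) (map_zero _) (Pfin qp w)
      = (Rc cs D w).sum fun z a => a • Pfin qp z := by
  have h1 : Finsupp.linearCombination A c
      (Finsupp.mapRange (LaurentPolynomial.invert (R := ℤ)) (map_zero _) (Pfin qp w))
      = D.bar (D.bas w) := by
    rw [Finsupp.linearCombination_apply]
    rw [Finsupp.sum_mapRange_index (fun a => by rw [zero_smul])]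
    have h2 : D.bar (D.bas w) = D.bar (Finsupp.linearCombination A c (Pfin qp w)) := by
      rw [Phi_Pfin cs c qp htrans]
    rw [h2, Finsupp.linearCombination_apply]
    rw [show D.bar ((Pfin qp w).sum fun i a => a • c i)
        = (barHom cs D) ((Pfin qp w).sum fun i a => a • c i) from rfl]
    rw [map_finsuppSum]
    apply Finsupp.sum_congr
    intro i _
    rw [barHom_apply, D.bar_smul, hcbar]
  have h3 : Finsupp.linearCombination A c ((Rc cs D w).sum fun z a => a • Pfin qp z)
      = D.bar (D.bas w) := by
    rw [map_finsuppSum]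
    have h4 : ((Rc cs D w).sum fun z a => Finsupp.linearCombination A c (a • Pfin qp z))
        = (Rc cs D w).sum fun z a => a • D.bas z := by
      apply Finsupp.sum_congr
      intro z _
      rw [map_smul, Phi_Pfin cs c qp htrans]
    rw [h4]
    exact (repr_sum_eq cs D (D.bar (D.bas w))).symm
  have h5 := Phi_inj cs c qp hsupp htrans
    (Finsupp.mapRange (LaurentPolynomial.invert (R := ℤ)) (map_zero _) (Pfin qp w)
      - (Rc cs D w).sum fun z a => a • Pfin qp z)
    (by rw [map_sub, h1, h3, sub_self])
  exact sub_eq_zero.mp h5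

theorem mainUB (c : I → D.V) (qp : I → I →₀ Polynomial ℤ)
    (hcbar : ∀ w : I, D.bar (c w) = c w)
    (hsupp : ∀ w y : I, qp w y ≠ 0 → BrLt cs (y : W) (w : W))
    (htrans : ∀ w : I,
      D.bas w = c w + (qp w).sum fun y p => (Q * Polynomial.toLaurent p) • c y) :
    ∀ n : ℕ, ∀ w y : I, cs.length (w : W) ≤ n → BrLt cs (y : W) (w : W) →
      UB ((cs.length (w : W) : ℤ) - cs.length (y : W))
        (Q * Polynomial.toLaurent (qp w y)) := by
  intro n
  induction n using Nat.strong_induction_on with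
  | _ n IHn =>
  intro w y hw hyw
  have hlyw : cs.length (y : W) < cs.length (w : W) := hyw.length_lt cs
  have hyne : y ≠ w := fun hc => hyw.2 (congrArg Subtype.val hc)
  obtain ⟨hA1, hA2, hA3⟩ := (claimAB cs D (cs.length (w : W))).1 w le_rfl
  have hwmem : w ∈ (Rc cs D w).support :=
    Finsupp.mem_support_iff.mpr (by rw [hA1]; exact one_ne_zero)
  have hidy := congrArg (fun t : I →₀ A => t y) (ident cs c qp hcbar hsupp htrans w)
  simp only [Finsupp.mapRange_apply, Finsupp.sum_apply, Finsupp.smul_apply, smul_eq_mul] at hidy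
  rw [Pfin_apply, if_neg (fun hc => hyne hc.symm), zero_add] at hidy
  have hsplit : ((Rc cs D w).sum fun z a => a * Pfin qp z y)
      = Rc cs D w w * Pfin qp w y
        + ∑ z ∈ (Rc cs D w).support.erase w, Rc cs D w z * Pfin qp z y :=
    (Finset.add_sum_erase _ _ hwmem).symm
  rw [hsplit, hA1, one_mul, Pfin_apply, if_neg (fun hc => hyne hc.symm), zero_add] at hidy
  have hkey : Q * Polynomial.toLaurent (qp w y)
      = LaurentPolynomial.invert (Q * Polynomial.toLaurent (qp w y))
        - ∑ z ∈ (Rc cs D w).support.erase w, Rc cs D w z * Pfin qp z y := by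
    linear_combination -hidy
  rw [hkey]
  apply UB.sub
  · have hc0 : (Polynomial.X * qp w y).coeff 0 = 0 := by
      rw [Polynomial.mul_coeff_zero, Polynomial.coeff_X_zero, zero_mul]
    have := UB.invert_toLaurent hc0
    rw [← hQL] at this
    exact this.mono (by omega)
  · apply UB.finsetSum
    intro z hz
    obtain ⟨hzw, hzmem⟩ := Finset.mem_erase.mp hz
    have hzlt : cs.length (z : W) < cs.length (w : W) :=
      hA2 z hzw (Finsupp.mem_support_iff.mp hzmem)
    have h1 := hA3 z
    have h2 : UB ((cs.length (z : W) : ℤ) - cs.length (y : W)) (Pfin qp z y) := by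
      rw [Pfin_apply]
      apply UB.add
      · apply UB.ite_zero
        intro hzy
        have : cs.length (y : W) = cs.length (z : W) := by rw [← hzy]
        exact UB.one.mono (by omega)
      · rcases eq_or_ne (qp z y) 0 with h0 | h0
        · rw [h0, map_zero, mul_zero]; exact UB.zero _
        · have hbr := hsupp z y h0
          have := hbr.length_lt cs
          have hn : 1 ≤ n := by omega
          exact IHn (n - 1) (by omega) z y (by omega) hbr
    exact (h1.mul h2).mono (by omega)

end Final
/-- the degree bound for the polynomials `q_{y,w}`. -/
theorem stmt10 (I : Set W) (J : Set B) (D : WGModule cs I J)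
    (c : I → D.V) (qp : I → I →₀ Polynomial ℤ)
    (hcbar : ∀ w : I, D.bar (c w) = c w)
    (hsupp : ∀ w y : I, qp w y ≠ 0 → BrLt cs (y : W) (w : W))
    (htrans : ∀ w : I,
      D.bas w = c w + (qp w).sum fun y p => (Q * Polynomial.toLaurent p) • c y)
    (y w : I) (hyw : BrLt cs (y : W) (w : W)) :
    (qp w y).degree ≤ ((cs.length (w : W) - cs.length (y : W) - 1 : ℕ) : WithBot ℕ) := by
  have hub := mainUB cs (D := D) c qp hcbar hsupp htrans (cs.length (w : W)) w y le_rfl hyw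
  have hlyw : cs.length (y : W) < cs.length (w : W) := hyw.length_lt cs
  rw [Polynomial.degree_le_iff_coeff_zero]
  intro m hm
  have hm' : cs.length (w : W) - cs.length (y : W) - 1 < m := by exact_mod_cast hm
  have h1 : (qp w y).coeff m = (Polynomial.X * qp w y).coeff (m + 1) :=
    (Polynomial.coeff_X_mul _ m).symm
  have h2 : (Polynomial.X * qp w y).coeff (m + 1)
      = (Polynomial.toLaurent (Polynomial.X * qp w y)).coeff ((m + 1 : ℕ) : ℤ) :=
    (toLaurent_coeff _ _).symm
  rw [h1, h2, ← hQL]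
  exact hub ((m + 1 : ℕ) : ℤ) (by push_cast; omega)

end WGI
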